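/- Suppose the link function Q satisfies (A1) g'(x) = g'(Q(x)) for all x ∈ 𝒳⁻, (A2) ω(x) + ω(Q(x)) ≥ 0 for all x ∈ 𝒳⁻, (A3) ∫_{𝒳⁻} ω(x)(1 − Q'(x)) g'(x) dx = 0, and additionally (A4) ∫_{𝒳⁻} ω(x)(1 − Q'(x)) dx = 0. Then the total transformed weight equals the total original weight: ∫_{𝒳} ω(x) dx = ∫_{𝒳 \ 𝒳⁻} ω̃(x) dx. -/

import Mathlib

open MeasureTheory Set Real

/-- Proposition 1(2) of Kitagawa–Wang–Xu: under (A1)–(A4), the total transformed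
weight equals the total original weight. -/
theorem prop1_part2
    (𝒳 : Set ℝ) (h𝒳 : MeasurableSet 𝒳)
    (ω g g' Q Q' ωt : ℝ → ℝ)
    (hg : ∀ x, HasDerivAt g (g' x) x)
    (hωint : IntegrableOn ω 𝒳)
    (hQdiff : ∀ x ∈ {x ∈ 𝒳 | ω x < 0}, HasDerivAt Q (Q' x) x)
    (hQ'pos : ∀ x ∈ {x ∈ 𝒳 | ω x < 0}, 0 < Q' x)
    (hQinj : Set.InjOn Q {x ∈ 𝒳 | ω x < 0})
    (hQmaps : Set.MapsTo Q {x ∈ 𝒳 | ω x < 0} {x ∈ 𝒳 | 0 ≤ ω x})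
    -- defining properties of the transformed weights ω̃
    (hωt_link : ∀ x ∈ {x ∈ 𝒳 | ω x < 0}, ωt (Q x) = ω x + ω (Q x))
    (hωt_pos : ∀ x ∈ {x ∈ 𝒳 | 0 ≤ ω x} \ (Q '' {x ∈ 𝒳 | ω x < 0}), ωt x = ω x)
    (hωt_zero : ∀ x, x ∉ {x ∈ 𝒳 | 0 ≤ ω x} → ωt x = 0)
    -- integrability assumptions
    (hint2 : IntegrableOn ωt {x ∈ 𝒳 | 0 ≤ ω x})
    (hint3 : IntegrableOn (fun x => ω x * Q' x) {x ∈ 𝒳 | ω x < 0})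
    -- (A1): g' matches at linked points
    (hA1 : ∀ x ∈ {x ∈ 𝒳 | ω x < 0}, g' x = g' (Q x))
    -- (A2): net weight is nonnegative
    (hA2 : ∀ x ∈ {x ∈ 𝒳 | ω x < 0}, 0 ≤ ω x + ω (Q x))
    -- (A3): derivative condition on Q
    (hA3 : ∫ x in {x ∈ 𝒳 | ω x < 0}, ω x * (1 - Q' x) * g' x = 0)
    -- (A4): additional derivative condition on Q
    (hA4 : ∫ x in {x ∈ 𝒳 | ω x < 0}, ω x * (1 - Q' x) = 0) :
    ∫ x in 𝒳, ω x = ∫ x in 𝒳 \ {x ∈ 𝒳 | ω x < 0}, ωt x := by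
  set S : Set ℝ := {x ∈ 𝒳 | ω x < 0} with hS
  set T : Set ℝ := {x ∈ 𝒳 | 0 ≤ ω x} with hT
  have hTS : 𝒳 \ S = T := by
    ext x
    simp only [hS, hT, mem_diff, mem_setOf_eq, mem_sep_iff, not_and, not_lt]
    constructor
    · rintro ⟨hx, h⟩; exact ⟨hx, h hx⟩
    · rintro ⟨hx, h⟩; exact ⟨hx, fun _ => h⟩
  -- a measurable core S₀ ⊆ S with null difference
  obtain ⟨ω₀, hω₀meas, hω₀ae⟩ := hωint.aestronglyMeasurable
  have hNnull : volume ({x | ω x ≠ ω₀ x} ∩ 𝒳) = 0 := by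
    have := hω₀ae
    rw [Filter.EventuallyEq, ae_iff, Measure.restrict_apply' h𝒳] at this
    exact this
  set N' : Set ℝ := toMeasurable volume ({x | ω x ≠ ω₀ x} ∩ 𝒳) with hN'
  have hN'meas : MeasurableSet N' := measurableSet_toMeasurable _ _
  have hN'null : volume N' = 0 := by
    rw [hN', measure_toMeasurable]; exact hNnull
  have hsubN' : {x | ω x ≠ ω₀ x} ∩ 𝒳 ⊆ N' := subset_toMeasurable _ _
  set S₀ : Set ℝ := (𝒳 ∩ {x | ω₀ x < 0}) \ N' with hS₀
  have hS₀meas : MeasurableSet S₀ := by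
    refine ((h𝒳.inter ?_).diff hN'meas)
    exact hω₀meas.measurable measurableSet_Iio
  have hS₀S : S₀ ⊆ S := by
    rintro x ⟨⟨hx𝒳, hx0⟩, hxN⟩
    have : ω x = ω₀ x := by
      by_contra h
      exact hxN (hsubN' ⟨h, hx𝒳⟩)
    exact ⟨hx𝒳, this ▸ hx0⟩
  have hSdiffnull : volume (S \ S₀) = 0 := by
    refine measure_mono_null (fun x hx => ?_) hN'null
    obtain ⟨⟨hx𝒳, hxneg⟩, hxS₀⟩ := hx
    by_cases h : ω x = ω₀ x
    · by_contra hN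
      exact hxS₀ ⟨⟨hx𝒳, show ω₀ x < 0 by rw [← h]; exact hxneg⟩, hN⟩
    · exact hsubN' ⟨h, hx𝒳⟩
  have hSS₀ae : S =ᵐ[volume] S₀ := by
    rw [ae_eq_set]
    exact ⟨hSdiffnull, by simp [diff_eq_empty.2 hS₀S]⟩
  -- image of the exceptional null set under Q is null
  have hQimgnull : volume (Q '' (S \ S₀)) = 0 :=
    addHaar_image_eq_zero_of_differentiableOn_of_addHaar_eq_zero (μ := volume)
      (fun x hx => ((hQdiff x hx.1).differentiableAt).differentiableWithinAt) hSdiffnull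
  have hQS₀subQS : Q '' S₀ ⊆ Q '' S := image_mono hS₀S
  have hQSsub : Q '' S ⊆ Q '' S₀ ∪ Q '' (S \ S₀) := by
    rintro y ⟨x, hx, rfl⟩
    by_cases h : x ∈ S₀
    · exact Or.inl ⟨x, h, rfl⟩
    · exact Or.inr ⟨x, ⟨hx, h⟩, rfl⟩
  have hQS₀ae : Q '' S =ᵐ[volume] Q '' S₀ := by
    rw [ae_eq_set]
    constructor
    · refine measure_mono_null (fun y hy => ?_) hQimgnull
      rcases hQSsub hy.1 with h | h
      · exact absurd h hy.2
      · exact h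
    · simp [diff_eq_empty.2 hQS₀subQS]
  -- measurability of the image
  have hQcont : ContinuousOn Q S₀ :=
    fun x hx => ((hQdiff x (hS₀S hx)).continuousAt).continuousWithinAt
  have hQinj₀ : InjOn Q S₀ := hQinj.mono hS₀S
  have hQS₀meas : MeasurableSet (Q '' S₀) :=
    hS₀meas.image_of_continuousOn_injOn hQcont hQinj₀
  have hQS₀subT : Q '' S₀ ⊆ T := fun y ⟨x, hx, hxy⟩ => hxy ▸ hQmaps (hS₀S hx)
  -- change of variables
  have hderivW : ∀ x ∈ S₀, HasDerivWithinAt Q (Q' x) S₀ x :=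
    fun x hx => (hQdiff x (hS₀S hx)).hasDerivWithinAt
  have cv : ∀ h : ℝ → ℝ, ∫ y in Q '' S₀, h y = ∫ x in S₀, Q' x * h (Q x) := by
    intro h
    rw [integral_image_eq_integral_abs_deriv_smul hS₀meas hderivW hQinj₀ h]
    refine setIntegral_congr_fun hS₀meas fun x hx => ?_
    rw [smul_eq_mul, abs_of_pos (hQ'pos x (hS₀S hx))]
  -- integrabilities
  have I_ωT : IntegrableOn ω T := hωint.mono_set (fun x hx => hx.1)
  have I_ωS : IntegrableOn ω S := hωint.mono_set (fun x hx => hx.1)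
  have I_ωtQS₀ : IntegrableOn ωt (Q '' S₀) := hint2.mono_set hQS₀subT
  have I3₀ : IntegrableOn (fun x => ω x * Q' x) S₀ := hint3.mono_set hS₀S
  have I3₀' : IntegrableOn (fun x => Q' x * ω x) S₀ := by
    simpa [mul_comm] using I3₀
  have IcompQfull : IntegrableOn (fun x => |Q' x| • ωt (Q x)) S₀ :=
    (integrableOn_image_iff_integrableOn_abs_deriv_smul hS₀meas hderivW hQinj₀ ωt).mp I_ωtQS₀
  have IcompQfull' : IntegrableOn (fun x => Q' x * ω x + Q' x * ω (Q x)) S₀ := by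
    refine IcompQfull.congr_fun (fun x hx => ?_) hS₀meas
    dsimp only
    rw [smul_eq_mul, abs_of_pos (hQ'pos x (hS₀S hx)), hωt_link x (hS₀S hx), mul_add]
  have IcompQ : IntegrableOn (fun x => Q' x * ω (Q x)) S₀ := by
    have h := IcompQfull'.sub I3₀'
    exact IntegrableOn.congr_fun h (fun x hx => by simp) hS₀meas
  -- middle piece: ∫_{Q''S₀} ωt = ∫_{S₀} Q'·ω + ∫_{Q''S₀} ω
  have middle : ∫ y in Q '' S₀, ωt y
      = (∫ x in S₀, Q' x * ω x) + ∫ y in Q '' S₀, ω y := by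
    rw [cv ωt, cv ω]
    have : ∫ x in S₀, Q' x * ωt (Q x)
        = ∫ x in S₀, (Q' x * ω x + Q' x * ω (Q x)) := by
      refine setIntegral_congr_fun hS₀meas fun x hx => ?_
      rw [hωt_link x (hS₀S hx), mul_add]
    rw [this, integral_add I3₀' IcompQ]
  -- set 𝒳 \ S is a.e. equal to the measurable set 𝒳 \ S₀, and equals T
  have hXSae : (𝒳 \ S₀ : Set ℝ) =ᵐ[volume] T := by
    rw [← hTS]
    rw [Filter.eventuallyEq_set] at hSS₀ae ⊢
    filter_upwards [hSS₀ae] with x hx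
    simp only [mem_diff]
    exact and_congr_right fun _ => not_congr hx.symm
  have hTnullmeas : NullMeasurableSet T volume :=
    ((h𝒳.diff hS₀meas).nullMeasurableSet).congr hXSae
  -- tail piece: ∫_{T \ Q''S₀} ωt = ∫_{T \ Q''S₀} ω
  have tail : ∫ y in T \ Q '' S₀, ωt y = ∫ y in T \ Q '' S₀, ω y := by
    refine integral_congr_ae ?_
    have h1 : ∀ᵐ y ∂(volume.restrict (T \ Q '' S₀)), y ∈ T \ Q '' S₀ :=
      ae_restrict_mem₀ (hTnullmeas.diff hQS₀meas.nullMeasurableSet)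
    have h2 : ∀ᵐ y ∂(volume.restrict (T \ Q '' S₀)), y ∉ Q '' (S \ S₀) :=
      Filter.Eventually.filter_mono Measure.restrict_le_self.absolutelyContinuous.ae_le
        (measure_eq_zero_iff_ae_notMem.mp hQimgnull)
    filter_upwards [h1, h2] with y hy hy2
    refine (hωt_pos y ⟨hy.1, fun hc => ?_⟩).symm ▸ rfl
    rcases hQSsub hc with h | h
    · exact hy.2 h
    · exact hy2 h
  -- splitting over T
  have splitωt : (∫ y in T ∩ Q '' S₀, ωt y) + ∫ y in T \ Q '' S₀, ωt y = ∫ y in T, ωt y :=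
    integral_inter_add_diff hQS₀meas hint2
  have splitω : (∫ y in T ∩ Q '' S₀, ω y) + ∫ y in T \ Q '' S₀, ω y = ∫ y in T, ω y :=
    integral_inter_add_diff hQS₀meas I_ωT
  have hTinter : T ∩ Q '' S₀ = Q '' S₀ := inter_eq_self_of_subset_right hQS₀subT
  rw [hTinter] at splitωt splitω
  -- splitting over 𝒳
  have splitX : (∫ x in 𝒳 ∩ S₀, ω x) + ∫ x in 𝒳 \ S₀, ω x = ∫ x in 𝒳, ω x :=
    integral_inter_add_diff hS₀meas hωint
  have hXinter : 𝒳 ∩ S₀ = S₀ := inter_eq_self_of_subset_right (fun x hx => (hS₀S hx).1)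
  rw [hXinter] at splitX
  have hXdiff : ∫ x in 𝒳 \ S₀, ω x = ∫ x in T, ω x := setIntegral_congr_set hXSae
  -- (A4) gives ∫_S ω = ∫_S ω·Q'
  have hA4' : ∫ x in S, ω x = ∫ x in S, ω x * Q' x := by
    have : ∫ x in S, (ω x - ω x * Q' x) = 0 := by
      rw [← hA4]
      refine integral_congr_ae (Filter.Eventually.of_forall fun x => ?_)
      ring
    rw [integral_sub I_ωS hint3] at this
    linarith
  have hSS₀int : ∀ f : ℝ → ℝ, ∫ x in S, f x = ∫ x in S₀, f x :=
    fun f => setIntegral_congr_set hSS₀ae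
  -- assemble
  have key : ∫ x in S₀, ω x = ∫ x in S₀, Q' x * ω x := by
    rw [← hSS₀int ω, hA4', hSS₀int (fun x => ω x * Q' x)]
    exact setIntegral_congr_fun hS₀meas fun x _ => mul_comm _ _
  rw [hTS, ← splitX, hXdiff, key, ← splitωt, middle, tail]
  linarith [splitω]
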